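/- Let c ∈ [0,1), f : ℝ → ℝ continuous with t·f(t) ≥ 0 for all t and |f(t)| ≤ a|t| for all |t| ≥ t₀ with some a ≤ 1. Suppose liminf_{t→0⁻} f(t)/t ≥ α₁ and liminf_{t→0⁺} f(t)/t ≥ α₂ with (1−√(1−c))² < αᵢ < (1+√(1−c))² for i = 1,2. Then every solution of x_{n+1} = c·x_n + f(x_n − x_{n−1}) oscillates (is neither eventually positive nor eventually negative). -/

import Mathlib

open Filter Topology

lemma fzero15 (f : ℝ → ℝ) (hf : Continuous f) (hsign : ∀ t : ℝ, 0 ≤ t * f t) : f 0 = 0 := by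
  have hneg : ∀ t : ℝ, t < 0 → f t ≤ 0 := by
    intro t ht; nlinarith [hsign t]
  have hpos : ∀ t : ℝ, 0 < t → 0 ≤ f t := by
    intro t ht; nlinarith [hsign t]
  have h1 : f 0 ≤ 0 := by
    have ht : Tendsto f (nhdsWithin 0 (Set.Iio 0)) (nhds (f 0)) :=
      (hf.tendsto 0).mono_left nhdsWithin_le_nhds
    refine le_of_tendsto ht ?_
    filter_upwards [self_mem_nhdsWithin] with t ht'
    exact hneg t ht'
  have h2 : 0 ≤ f 0 := by
    have ht : Tendsto f (nhdsWithin 0 (Set.Ioi 0)) (nhds (f 0)) :=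
      (hf.tendsto 0).mono_left nhdsWithin_le_nhds
    refine ge_of_tendsto ht ?_
    filter_upwards [self_mem_nhdsWithin] with t ht'
    exact hpos t ht'
  linarith

lemma key15 (c β : ℝ) (hcβ : 0 < c + β) (hd : (c + β) ^ 2 < 4 * β)
    (y : ℕ → ℝ) (hy : ∀ n, 0 < y n)
    (hrec : ∀ n, y (n + 2) ≤ (c + β) * y (n + 1) - β * y n) : False := by
  have hβ : 0 < β := by nlinarith [sq_nonneg (c + β)]
  set m : ℝ := β - (c + β) ^ 2 / 4 with hm
  have hmpos : 0 < m := by rw [hm]; linarith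
  set δ : ℝ := m / (c + β) with hδdef
  have hδ : 0 < δ := div_pos hmpos hcβ
  have hδm : δ * (c + β) = m := div_mul_cancel₀ _ (ne_of_gt hcβ)
  clear_value m δ
  clear hδdef
  set L : ℕ → ℝ := fun n => y (n + 1) / y n with hLdef
  have hLpos : ∀ n, 0 < L n := fun n => div_pos (hy _) (hy _)
  have hLub : ∀ n, L (n + 1) < c + β := by
    intro n
    have h1 := hrec n
    have h2 : y (n + 2) < (c + β) * y (n + 1) := by nlinarith [hy n]
    exact (div_lt_iff₀ (hy (n + 1))).mpr h2
  have hLdec : ∀ n, L (n + 2) ≤ L (n + 1) - δ := by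
    intro n
    have hy1 := hy (n + 1)
    have hy2 := hy (n + 2)
    have h1 := hrec (n + 1)
    have e1 : L (n + 2) * y (n + 2) = y (n + 3) := by
      simp only [hLdef]; exact div_mul_cancel₀ _ (ne_of_gt hy2)
    have e2 : L (n + 1) * y (n + 1) = y (n + 2) := by
      simp only [hLdef]; exact div_mul_cancel₀ _ (ne_of_gt hy1)
    have hu := hLub n
    have hu0 := hLpos (n + 1)
    have h4 : L (n + 2) * L (n + 1) * y (n + 1) ≤ ((c + β) * L (n + 1) - β) * y (n + 1) := by
      have eL : L (n + 2) * L (n + 1) * y (n + 1) = y (n + 3) := by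
        rw [mul_assoc, e2, e1]
      have eR : ((c + β) * L (n + 1) - β) * y (n + 1)
          = (c + β) * y (n + 2) - β * y (n + 1) := by
        rw [sub_mul, mul_assoc, e2]
      rw [eL, eR]
      have e3 : n + 1 + 2 = n + 3 := by omega
      have e4 : n + 1 + 1 = n + 2 := by omega
      rw [e3, e4] at h1
      exact h1
    have h3 : L (n + 2) * L (n + 1) ≤ (c + β) * L (n + 1) - β :=
      le_of_mul_le_mul_right h4 hy1
    by_contra hcon
    push_neg at hcon
    have h5 : (L (n + 1) - δ) * L (n + 1) < L (n + 2) * L (n + 1) :=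
      mul_lt_mul_of_pos_right hcon hu0
    nlinarith [h3, hδm, mul_pos hδ (sub_pos.mpr hu), sq_nonneg (L (n + 1) - (c + β) / 2)]
  have hind : ∀ k : ℕ, L (k + 2) ≤ L 2 - k * δ := by
    intro k
    induction k with
    | zero => simp
    | succ k ih =>
      push_cast
      calc L (k + 1 + 2) ≤ L (k + 1 + 1) - δ := hLdec (k + 1)
        _ = L (k + 2) - δ := by norm_num
        _ ≤ L 2 - k * δ - δ := by linarith
        _ = L 2 - (k + 1) * δ := by ring
  obtain ⟨k, hk⟩ := exists_nat_gt (L 2 / δ)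
  have h1 : L 2 < k * δ := by
    rw [div_lt_iff₀ hδ] at hk; linarith
  have := hind k
  have := hLpos (k + 2)
  linarith

lemma poscase15 (c a t₀ α : ℝ) (hc0 : 0 ≤ c) (hc1 : c < 1) (f : ℝ → ℝ)
    (hf : Continuous f) (hsign : ∀ t : ℝ, 0 ≤ t * f t)
    (ht₀ : 0 < t₀) (ha1 : a ≤ 1)
    (hfb : ∀ t : ℝ, t₀ ≤ |t| → |f t| ≤ a * |t|)
    (hl : α ≤ Filter.liminf (fun t => f t / t) (nhdsWithin 0 (Set.Iio 0)))
    (hα : (1 - Real.sqrt (1 - c)) ^ 2 < α ∧ α < (1 + Real.sqrt (1 - c)) ^ 2)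
    (x : ℕ → ℝ)
    (hx : ∀ n : ℕ, 1 ≤ n → x (n + 1) = c * x n + f (x n - x (n - 1))) :
    ¬ (∃ N : ℕ, ∀ n : ℕ, N ≤ n → 0 < x n) := by
  have hf0 : f 0 = 0 := fzero15 f hf hsign
  have hfneg : ∀ t : ℝ, t ≤ 0 → f t ≤ 0 := by
    intro t ht
    rcases eq_or_lt_of_le ht with h | h
    · simp [h, hf0]
    · nlinarith [hsign t]
  have hfpos : ∀ t : ℝ, 0 ≤ t → 0 ≤ f t := by
    intro t ht
    rcases eq_or_lt_of_le ht with h | h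
    · simp [← h, hf0]
    · nlinarith [hsign t]
  rintro ⟨N₀, hN₀⟩
  set N := N₀ + 1 with hNdef
  have hNpos : ∀ n, N ≤ n → 0 < x n := fun n hn => hN₀ n (by omega)
  set z : ℕ → ℝ := fun n => x (n + 1) - x n with hzdef
  have hrec : ∀ n : ℕ, x (n + 2) = c * x (n + 1) + f (z n) := by
    intro n
    have h := hx (n + 1) (by omega)
    simpa [hzdef] using h
  have hzrec : ∀ n : ℕ, z (n + 1) = -(1 - c) * x (n + 1) + f (z n) := by
    intro n
    have := hrec n
    simp only [hzdef]
    rw [show n + 1 + 1 = n + 2 from rfl, this]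
    ring
  by_cases hcase : ∃ n, N ≤ n ∧ z n ≤ 0
  · -- Case A : eventually decreasing
    obtain ⟨n₀, hn₀N, hz0⟩ := hcase
    have hzneg : ∀ k : ℕ, z (n₀ + 1 + k) < 0 := by
      intro k
      induction k with
      | zero =>
        have h := hzrec n₀
        have hx1 : 0 < x (n₀ + 1) := hNpos _ (by omega)
        have hfz : f (z n₀) ≤ 0 := hfneg _ hz0
        simpa using (by rw [h]; nlinarith : z (n₀ + 1) < 0)
      | succ k ih =>
        have h := hzrec (n₀ + 1 + k)
        have hx1 : 0 < x (n₀ + 1 + k + 1) := hNpos _ (by omega)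
        have hfz : f (z (n₀ + 1 + k)) ≤ 0 := hfneg _ ih.le
        have hlt : z (n₀ + 1 + k + 1) < 0 := by rw [h]; nlinarith
        simpa [show n₀ + 1 + (k + 1) = n₀ + 1 + k + 1 from by omega] using hlt
    have hzneg' : ∀ n, n₀ + 1 ≤ n → z n < 0 := by
      intro n hn
      obtain ⟨k, rfl⟩ := Nat.exists_eq_add_of_le hn
      exact hzneg k
    set g : ℕ → ℝ := fun k => x (k + (n₀ + 1)) with hgdef
    have hganti : Antitone g := by
      apply antitone_nat_of_succ_le
      intro k
      have hk := hzneg' (k + (n₀ + 1)) (by omega)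
      simp only [hzdef] at hk
      simp only [hgdef]
      have e : k + 1 + (n₀ + 1) = k + (n₀ + 1) + 1 := by omega
      rw [e]; linarith
    have hgbdd : BddBelow (Set.range g) := by
      refine ⟨0, ?_⟩
      rintro v ⟨k, rfl⟩
      exact (hNpos _ (by omega)).le
    set L : ℝ := ⨅ k, g k with hLdef
    have hgt : Tendsto g atTop (nhds L) := tendsto_atTop_ciInf hganti hgbdd
    have hxt : Tendsto x atTop (nhds L) := (tendsto_add_atTop_iff_nat (n₀ + 1)).mp hgt
    have hxt1 : Tendsto (fun n => x (n + 1)) atTop (nhds L) :=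
      (tendsto_add_atTop_iff_nat 1).mpr hxt
    have hzt : Tendsto z atTop (nhds 0) := by
      have := hxt1.sub hxt
      simpa [hzdef] using this
    have hztlt : Tendsto z atTop (nhdsWithin 0 (Set.Iio 0)) := by
      refine tendsto_nhdsWithin_of_tendsto_nhds_of_eventually_within z hzt ?_
      refine eventually_atTop.mpr ⟨n₀ + 1, fun n hn => ?_⟩
      exact Set.mem_Iio.mpr (hzneg' n hn)
    set s : ℝ := Real.sqrt (1 - c) with hsdef
    have hs2 : s ^ 2 = 1 - c := Real.sq_sqrt (by linarith)
    set β : ℝ := ((1 - s) ^ 2 + α) / 2 with hβdef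
    have hβ1 : (1 - s) ^ 2 < β := by rw [hβdef]; linarith [hα.1]
    have hβ2 : β < α := by rw [hβdef]; linarith [hα.1]
    have hβpos : 0 < β := lt_of_le_of_lt (sq_nonneg _) hβ1
    have hβup : β < (1 + s) ^ 2 := lt_trans hβ2 hα.2
    have hd : (c + β) ^ 2 < 4 * β := by
      nlinarith [mul_pos (sub_pos.mpr hβ1) (sub_pos.mpr hβup), hs2]
    have hcβ : 0 < c + β := by linarith
    have hbdd : IsBoundedUnder (· ≥ ·) (nhdsWithin 0 (Set.Iio 0)) (fun t => f t / t) := by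
      refine ⟨0, ?_⟩
      rw [eventually_map]
      filter_upwards [self_mem_nhdsWithin] with t ht
      exact div_nonneg_of_nonpos (hfneg t (le_of_lt ht)) (le_of_lt ht)
    have hev : ∀ᶠ t in nhdsWithin 0 (Set.Iio 0), β < f t / t :=
      eventually_lt_of_lt_liminf (lt_of_lt_of_le hβ2 hl) hbdd
    have hevn : ∀ᶠ n in atTop, β < f (z n) / z n := hztlt.eventually hev
    obtain ⟨N₁, hN₁⟩ := eventually_atTop.mp hevn
    set N₂ := max (max N N₁) (n₀ + 1) with hN₂
    refine key15 c β hcβ hd (fun k => x (N₂ + k)) (fun k => hNpos _ (by omega)) ?_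
    intro k
    have hzk : z (N₂ + k) < 0 := hzneg' _ (by omega)
    have hfk : β < f (z (N₂ + k)) / z (N₂ + k) := hN₁ _ (by omega)
    have hfk' : f (z (N₂ + k)) < β * z (N₂ + k) := (lt_div_iff_of_neg hzk).mp hfk
    have hr := hrec (N₂ + k)
    show x (N₂ + k + 2) ≤ (c + β) * x (N₂ + k + 1) - β * x (N₂ + k)
    simp only [hzdef] at hfk' hr
    rw [hr]
    nlinarith [hfk']
  · -- Case B : increasing
    push_neg at hcase
    set g : ℕ → ℝ := fun k => x (k + N) with hgdef
    have hgmono : Monotone g := by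
      apply monotone_nat_of_le_succ
      intro k
      have hk := hcase (k + N) (by omega)
      simp only [hzdef] at hk
      simp only [hgdef]
      have e : k + 1 + N = k + N + 1 := by omega
      rw [e]; linarith
    by_cases hB : BddAbove (Set.range g)
    · set L : ℝ := ⨆ k, g k with hLdef
      have hgt : Tendsto g atTop (nhds L) := tendsto_atTop_ciSup hgmono hB
      have hxt : Tendsto x atTop (nhds L) := (tendsto_add_atTop_iff_nat N).mp hgt
      have hxt1 : Tendsto (fun n => x (n + 1)) atTop (nhds L) :=
        (tendsto_add_atTop_iff_nat 1).mpr hxt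
      have hzt : Tendsto z atTop (nhds 0) := by
        have := hxt1.sub hxt
        simpa [hzdef] using this
      have hfzt : Tendsto (fun n => f (z n)) atTop (nhds 0) := by
        have := (hf.tendsto 0).comp hzt
        simpa [hf0, Function.comp_def] using this
      have hL : L = c * L + 0 := by
        have hxt2 : Tendsto (fun n => x (n + 2)) atTop (nhds L) :=
          (tendsto_add_atTop_iff_nat 2).mpr hxt
        have hxt2' : Tendsto (fun n => x (n + 2)) atTop (nhds (c * L + 0)) :=
          ((hxt1.const_mul c).add hfzt).congr fun n => (hrec n).symm
        exact tendsto_nhds_unique hxt2 hxt2'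
      have h1c : (1 - c) * L = 0 := by linarith [hL]
      have hL0 : L = 0 := by
        rcases mul_eq_zero.mp h1c with h | h
        · exfalso; linarith
        · exact h
      have hgL : g 0 ≤ L := le_ciSup hB 0
      have hxN : 0 < x N := hNpos N le_rfl
      simp only [hgdef] at hgL
      rw [hL0] at hgL
      simp only [Nat.zero_add] at hgL
      linarith
    · have hgt : Tendsto g atTop atTop := tendsto_atTop_atTop_of_monotone' hgmono hB
      have hxt : Tendsto x atTop atTop := (tendsto_add_atTop_iff_nat N).mp hgt
      obtain ⟨t₁, ht₁, hM⟩ := isCompact_Icc.exists_isMaxOn (Set.nonempty_Icc.mpr ht₀.le)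
        (hf.continuousOn (s := Set.Icc 0 t₀))
      set M := f t₁ with hMdef
      have hxT : Tendsto (fun n => (1 - c) * x (n + 1)) atTop atTop :=
        Tendsto.const_mul_atTop (by linarith) ((tendsto_add_atTop_iff_nat 1).mpr hxt)
      obtain ⟨N₁, hN₁⟩ := eventually_atTop.mp (hxT.eventually_gt_atTop M)
      set N₂ := max N N₁ with hN₂def
      refine key15 c 1 (by linarith) (by nlinarith) (fun k => x (N₂ + k))
        (fun k => hNpos _ (by omega)) ?_
      intro k
      have hzk : 0 < z (N₂ + k) := hcase _ (by omega)
      have hzk1 : 0 < z (N₂ + k + 1) := hcase _ (by omega)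
      have hr1 := hzrec (N₂ + k)
      have hM1 : M < (1 - c) * x (N₂ + k + 1) := hN₁ _ (by omega)
      have hfzM : M < f (z (N₂ + k)) := by
        rw [hr1] at hzk1; nlinarith
      have hzt₀ : t₀ ≤ z (N₂ + k) := by
        by_contra hcon
        push_neg at hcon
        have hmem : z (N₂ + k) ∈ Set.Icc 0 t₀ := ⟨hzk.le, hcon.le⟩
        exact absurd (hM hmem) (not_le.mpr hfzM)
      have hfz : f (z (N₂ + k)) ≤ z (N₂ + k) := by
        have h1 := hfb (z (N₂ + k)) (by rw [abs_of_pos hzk]; exact hzt₀)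
        rw [abs_of_pos hzk] at h1
        have h2 : |f (z (N₂ + k))| ≤ z (N₂ + k) := le_trans h1 (by nlinarith)
        exact le_trans (le_abs_self _) h2
      have hr := hrec (N₂ + k)
      show x (N₂ + k + 2) ≤ (c + 1) * x (N₂ + k + 1) - 1 * x (N₂ + k)
      rw [hr]
      simp only [hzdef] at hfz ⊢
      linarith

theorem stmt15 (c a t₀ α₁ α₂ : ℝ) (hc0 : 0 ≤ c) (hc1 : c < 1) (f : ℝ → ℝ)
    (hf : Continuous f) (hsign : ∀ t : ℝ, 0 ≤ t * f t)
    (ht₀ : 0 < t₀) (ha1 : a ≤ 1)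
    (hfb : ∀ t : ℝ, t₀ ≤ |t| → |f t| ≤ a * |t|)
    (hl1 : α₁ ≤ Filter.liminf (fun t => f t / t) (nhdsWithin 0 (Set.Iio 0)))
    (hl2 : α₂ ≤ Filter.liminf (fun t => f t / t) (nhdsWithin 0 (Set.Ioi 0)))
    (hα₁ : (1 - Real.sqrt (1 - c)) ^ 2 < α₁ ∧ α₁ < (1 + Real.sqrt (1 - c)) ^ 2)
    (hα₂ : (1 - Real.sqrt (1 - c)) ^ 2 < α₂ ∧ α₂ < (1 + Real.sqrt (1 - c)) ^ 2)
    (x : ℕ → ℝ)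
    (hx : ∀ n : ℕ, 1 ≤ n → x (n + 1) = c * x n + f (x n - x (n - 1))) :
    ¬ (∃ N : ℕ, ∀ n : ℕ, N ≤ n → 0 < x n) ∧
    ¬ (∃ N : ℕ, ∀ n : ℕ, N ≤ n → x n < 0) := by
  constructor
  · exact poscase15 c a t₀ α₁ hc0 hc1 f hf hsign ht₀ ha1 hfb hl1 hα₁ x hx
  · rintro ⟨N, hN⟩
    have hmap : Filter.map (fun t : ℝ => -t) (nhdsWithin 0 (Set.Ioi 0))
        = nhdsWithin 0 (Set.Iio 0) := by
      have h := ((Homeomorph.neg ℝ).isEmbedding.map_nhdsWithin_eq (Set.Ioi 0) 0)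
      simpa [Set.image_neg_Ioi] using h
    have hlim : Filter.liminf (fun t => -f (-t) / t) (nhdsWithin 0 (Set.Iio 0))
        = Filter.liminf (fun t => f t / t) (nhdsWithin 0 (Set.Ioi 0)) := by
      have hfun : ((fun t => -f (-t) / t) ∘ fun t : ℝ => -t) = fun t => f t / t := by
        funext s
        simp [Function.comp, neg_div_neg_eq]
      rw [← hmap, Filter.liminf, Filter.map_map, hfun, Filter.liminf]
    refine poscase15 c a t₀ α₂ hc0 hc1 (fun t => -f (-t))
      ((hf.comp continuous_neg).neg) ?_ ht₀ ha1 ?_ ?_ hα₂ (fun n => -x n) ?_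
      ⟨N, fun n hn => neg_pos.mpr (hN n hn)⟩
    · intro t
      have h : t * -f (-t) = -t * f (-t) := by ring
      rw [h]
      exact hsign (-t)
    · intro t ht
      have h := hfb (-t) (by rwa [abs_neg])
      rw [abs_neg] at h
      simpa [abs_neg] using h
    · rw [hlim]
      exact hl2
    · intro n hn
      have h := hx n hn
      have harg : -x n - -x (n - 1) = -(x n - x (n - 1)) := by ring
      simp only [harg]
      rw [neg_neg, h]
      ring
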